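/- Let S be a non-degenerately G-graded ring and H a subgroup of G. If A is a left (resp. right) ideal of S, then π_H(A) is a left (resp. right) ideal of S_H; moreover if A is nonzero then π_H(A) is nonzero. -/

import Mathlib

open Pointwise
open scoped Classical

/-- The projection `π_H : S → S_H` of a `G`-graded ring onto the part supported on a subset
`H ⊆ G`: it sends `Σ_{x ∈ G} s_x` to `Σ_{x ∈ H} s_x`. -/
noncomputable def gradedProj {G : Type*} [Group G] [DecidableEq G]
    {S : Type*} [NonUnitalRing S] (𝒮 : G → AddSubgroup S) [DirectSum.Decomposition 𝒮]
    (H : Set G) (a : S) : S :=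
  ∑ x ∈ (DirectSum.decompose 𝒮 a).support,
    if x ∈ H then ((DirectSum.decompose 𝒮 a) x : S) else 0

section Aux

variable {G : Type*} [Group G] [DecidableEq G]
    {S : Type*} [NonUnitalRing S] (𝒮 : G → AddSubgroup S) [DirectSum.Decomposition 𝒮]

/-- `gradedProj` as a bundled additive monoid hom. -/
noncomputable def piHom (H : Set G) : S →+ S :=
  (DirectSum.toAddMonoid (fun x : G => if x ∈ H then (𝒮 x).subtype else 0)).comp
    (DirectSum.decomposeAddEquiv 𝒮).toAddMonoidHom

lemma piHom_apply (H : Set G) (a : S) : piHom 𝒮 H a = gradedProj 𝒮 H a := by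
  have h0 : piHom 𝒮 H a = DFinsupp.sumAddHom
      (fun x : G => if x ∈ H then (𝒮 x).subtype else 0) (DirectSum.decompose 𝒮 a) := rfl
  rw [h0, DFinsupp.sumAddHom_apply, gradedProj, DFinsupp.sum]
  refine Finset.sum_congr rfl fun x _ => ?_
  split_ifs <;> rfl

lemma piHom_coe (H : Set G) {x : G} (v : 𝒮 x) :
    piHom 𝒮 H (v : S) = if x ∈ H then (v : S) else 0 := by
  have h0 : piHom 𝒮 H (v : S)
      = DirectSum.toAddMonoid (fun x : G => if x ∈ H then (𝒮 x).subtype else 0)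
        (DirectSum.decompose 𝒮 (v : S)) := rfl
  rw [h0, DirectSum.decompose_coe, DirectSum.toAddMonoid_of]
  split_ifs <;> rfl

lemma decompose_coe_apply {x y : G} (v : 𝒮 x) :
    ((DirectSum.decompose 𝒮 (v : S)) y : S) = if x = y then (v : S) else 0 := by
  rw [DirectSum.decompose_coe]
  split_ifs with h
  · subst h; rw [DirectSum.of_eq_same]
  · rw [DirectSum.of_eq_of_ne _ _ _ (Ne.symm h)]; rfl

lemma decompose_piHom (H : Set G) (a : S) (y : G) :
    ((DirectSum.decompose 𝒮 (piHom 𝒮 H a)) y : S)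
      = if y ∈ H then ((DirectSum.decompose 𝒮 a) y : S) else 0 := by
  induction a using DirectSum.Decomposition.inductionOn 𝒮 with
  | zero => simp
  | @homogeneous x m =>
    rw [piHom_coe]
    by_cases hx : x ∈ H
    · rw [if_pos hx, decompose_coe_apply]
      split_ifs <;> simp_all
    · rw [if_neg hx, decompose_coe_apply, DirectSum.decompose_zero]
      split_ifs <;> simp_all
  | add m m' ih ih' =>
    rw [map_add, DirectSum.decompose_add, DirectSum.add_apply, AddSubgroup.coe_add, ih, ih',
      DirectSum.decompose_add, DirectSum.add_apply, AddSubgroup.coe_add]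
    split_ifs <;> simp

lemma piHom_mem_iSup (H : Subgroup G) (a : S) :
    piHom 𝒮 (H : Set G) a ∈ (⨆ h ∈ H, 𝒮 h : AddSubgroup S) := by
  induction a using DirectSum.Decomposition.inductionOn 𝒮 with
  | zero => rw [map_zero]; exact zero_mem _
  | @homogeneous x m =>
    rw [piHom_coe]
    split_ifs with hx
    · exact le_iSup₂ (f := fun h (_ : h ∈ H) => 𝒮 h) x hx m.2
    · exact zero_mem _
  | add m m' ih ih' => rw [map_add]; exact add_mem ih ih'

variable (hmul : ∀ {x y : G} {a b : S}, a ∈ 𝒮 x → b ∈ 𝒮 y → a * b ∈ 𝒮 (x * y))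

include hmul

lemma piHom_mul_left (H : Subgroup G) {s : S}
    (hs : s ∈ (⨆ h ∈ H, 𝒮 h : AddSubgroup S)) (a : S) :
    piHom 𝒮 (H : Set G) (s * a) = s * piHom 𝒮 (H : Set G) a := by
  rw [iSup_subtype'] at hs
  revert a
  refine AddSubgroup.iSup_induction (fun h : H => 𝒮 h)
    (C := fun s => ∀ a, piHom 𝒮 (H : Set G) (s * a) = s * piHom 𝒮 (H : Set G) a) hs
    (fun i s hsi => ?_) (by simp) (fun s t ihs iht a => by
      rw [add_mul, map_add, ihs, iht, add_mul])
  intro a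
  induction a using DirectSum.Decomposition.inductionOn 𝒮 with
  | zero => simp
  | @homogeneous x m =>
    have h1 : s * (m : S) ∈ 𝒮 ((i : G) * x) := hmul hsi m.2
    rw [piHom_coe 𝒮 (H : Set G) (⟨s * m, h1⟩ : 𝒮 ((i : G) * x)), piHom_coe]
    simp only [SetLike.mem_coe]
    have : (i : G) * x ∈ H ↔ x ∈ H := H.mul_mem_cancel_left i.2
    by_cases hx : x ∈ H
    · rw [if_pos hx, if_pos (this.mpr hx)]
    · rw [if_neg hx, if_neg (fun hh => hx (this.mp hh)), mul_zero]
  | add m m' ih ih' =>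
    rw [mul_add, map_add, ih, ih', map_add, mul_add]

lemma piHom_mul_right (H : Subgroup G) {s : S}
    (hs : s ∈ (⨆ h ∈ H, 𝒮 h : AddSubgroup S)) (a : S) :
    piHom 𝒮 (H : Set G) (a * s) = piHom 𝒮 (H : Set G) a * s := by
  rw [iSup_subtype'] at hs
  revert a
  refine AddSubgroup.iSup_induction (fun h : H => 𝒮 h)
    (C := fun s => ∀ a, piHom 𝒮 (H : Set G) (a * s) = piHom 𝒮 (H : Set G) a * s) hs
    (fun i s hsi => ?_) (by simp) (fun s t ihs iht a => by
      rw [mul_add, map_add, ihs, iht, mul_add])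
  intro a
  induction a using DirectSum.Decomposition.inductionOn 𝒮 with
  | zero => simp
  | @homogeneous x m =>
    have h1 : (m : S) * s ∈ 𝒮 (x * (i : G)) := hmul m.2 hsi
    rw [piHom_coe 𝒮 (H : Set G) (⟨(m : S) * s, h1⟩ : 𝒮 (x * (i : G))), piHom_coe]
    simp only [SetLike.mem_coe]
    have : x * (i : G) ∈ H ↔ x ∈ H := H.mul_mem_cancel_right i.2
    by_cases hx : x ∈ H
    · rw [if_pos hx, if_pos (this.mpr hx)]
    · rw [if_neg hx, if_neg (fun hh => hx (this.mp hh)), zero_mul]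
  | add m m' ih ih' =>
    rw [add_mul, map_add, ih, ih', map_add, add_mul]

omit hmul

/-- the coe-of-component-at-`y` additive hom. -/
noncomputable def compHom (y : G) : S →+ S :=
  ((𝒮 y).subtype.comp (DFinsupp.evalAddMonoidHom y)).comp
    (DirectSum.decomposeAddEquiv 𝒮).toAddMonoidHom

lemma compHom_apply (y : G) (a : S) :
    compHom 𝒮 y a = ((DirectSum.decompose 𝒮 a) y : S) := rfl

include hmul

lemma exists_component_one {a : S} (ha : a ≠ 0) :
    ∃ x : G, ((DirectSum.decompose 𝒮 a) x : S) ≠ 0 := by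
  by_contra hcon
  push_neg at hcon
  apply ha
  rw [← DirectSum.sum_support_decompose 𝒮 a]
  exact Finset.sum_eq_zero fun x _ => hcon x

lemma component_one_mul {x : G} {t a : S} (ht : t ∈ 𝒮 x⁻¹)
    (hax : ((DirectSum.decompose 𝒮 a) x : S) ≠ 0) :
    ((DirectSum.decompose 𝒮 (t * a)) 1 : S) = t * ((DirectSum.decompose 𝒮 a) x : S) := by
  have hxsupp : x ∈ (DirectSum.decompose 𝒮 a).support := by
    rw [DFinsupp.mem_support_iff]
    exact fun h => hax (by rw [h]; rfl)
  conv_lhs => rw [← compHom_apply, ← DirectSum.sum_support_decompose 𝒮 a, Finset.mul_sum,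
    map_sum]
  rw [Finset.sum_congr rfl (fun y _ => by
    rw [compHom_apply, decompose_coe_apply 𝒮 (⟨t * _, hmul ht ((DirectSum.decompose 𝒮 a) y).2⟩ : 𝒮 (x⁻¹ * y))])]
  simp only [inv_mul_eq_one]
  rw [Finset.sum_ite_eq _ x (fun y => t * ((DirectSum.decompose 𝒮 a) y : S)), if_pos hxsupp]

lemma component_one_mul' {x : G} {t a : S} (ht : t ∈ 𝒮 x⁻¹)
    (hax : ((DirectSum.decompose 𝒮 a) x : S) ≠ 0) :
    ((DirectSum.decompose 𝒮 (a * t)) 1 : S) = ((DirectSum.decompose 𝒮 a) x : S) * t := by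
  have hxsupp : x ∈ (DirectSum.decompose 𝒮 a).support := by
    rw [DFinsupp.mem_support_iff]
    exact fun h => hax (by rw [h]; rfl)
  conv_lhs => rw [← compHom_apply, ← DirectSum.sum_support_decompose 𝒮 a, Finset.sum_mul,
    map_sum]
  rw [Finset.sum_congr rfl (fun y _ => by
    rw [compHom_apply, decompose_coe_apply 𝒮 (⟨_ * t, hmul ((DirectSum.decompose 𝒮 a) y).2 ht⟩ : 𝒮 (y * x⁻¹))])]
  simp only [mul_inv_eq_one]
  rw [Finset.sum_ite_eq' _ x (fun y => ((DirectSum.decompose 𝒮 a) y : S) * t), if_pos hxsupp]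

end Aux

/-- Let `S` be a non-degenerately `G`-graded ring and `H` a subgroup of `G`. If `A` is a left
(resp. right) ideal of `S`, then `π_H(A)` is a left (resp. right) ideal of
`S_H := ⊕_{x ∈ H} S_x`; moreover, if `A` is nonzero then `π_H(A)` is nonzero. -/
theorem gradedProj_ideal {G : Type*} [Group G] [DecidableEq G]
    {S : Type*} [NonUnitalRing S] (𝒮 : G → AddSubgroup S)
    [DirectSum.Decomposition 𝒮]
    (hmul : ∀ {x y : G} {a b : S}, a ∈ 𝒮 x → b ∈ 𝒮 y → a * b ∈ 𝒮 (x * y))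
    (hnd : ∀ x : G, ∀ s ∈ 𝒮 x, s ≠ 0 →
      (∃ t ∈ 𝒮 x⁻¹, s * t ≠ 0) ∧ (∃ t ∈ 𝒮 x⁻¹, t * s ≠ 0))
    (H : Subgroup G) (A : AddSubgroup S) :
    ((∀ s : S, ∀ a ∈ A, s * a ∈ A) →
      ∃ B : AddSubgroup S, (B : Set S) = gradedProj 𝒮 (H : Set G) '' (A : Set S) ∧
        B ≤ (⨆ h ∈ H, 𝒮 h : AddSubgroup S) ∧
        (∀ s ∈ (⨆ h ∈ H, 𝒮 h : AddSubgroup S), ∀ b ∈ B, s * b ∈ B) ∧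
        (A ≠ ⊥ → B ≠ ⊥)) ∧
    ((∀ s : S, ∀ a ∈ A, a * s ∈ A) →
      ∃ B : AddSubgroup S, (B : Set S) = gradedProj 𝒮 (H : Set G) '' (A : Set S) ∧
        B ≤ (⨆ h ∈ H, 𝒮 h : AddSubgroup S) ∧
        (∀ s ∈ (⨆ h ∈ H, 𝒮 h : AddSubgroup S), ∀ b ∈ B, b * s ∈ B) ∧
        (A ≠ ⊥ → B ≠ ⊥)) := by
  have hcoe : ∀ B : AddSubgroup S, B = A.map (piHom 𝒮 (H : Set G)) →
      (B : Set S) = gradedProj 𝒮 (H : Set G) '' (A : Set S) := by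
    rintro B rfl
    rw [AddSubgroup.coe_map]
    exact Set.image_congr fun a _ => piHom_apply 𝒮 (H : Set G) a
  have hle : A.map (piHom 𝒮 (H : Set G)) ≤ (⨆ h ∈ H, 𝒮 h : AddSubgroup S) := by
    rintro b hb
    obtain ⟨a, _, rfl⟩ := AddSubgroup.mem_map.mp hb
    exact piHom_mem_iSup 𝒮 H a
  have hnzero : ∀ b : S, b ∈ A → piHom 𝒮 (H : Set G) b ≠ 0 →
      A.map (piHom 𝒮 (H : Set G)) ≠ ⊥ := by
    intro b hb hne hbot
    exact hne (by simpa [hbot, AddSubgroup.mem_bot] using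
      AddSubgroup.mem_map_of_mem (piHom 𝒮 (H : Set G)) hb)
  have hpi_ne : ∀ b : S, ((DirectSum.decompose 𝒮 b) 1 : S) ≠ 0 →
      piHom 𝒮 (H : Set G) b ≠ 0 := by
    intro b hb hzero
    apply hb
    have := decompose_piHom 𝒮 (H : Set G) b 1
    rw [hzero, if_pos (show (1:G) ∈ (H : Set G) from H.one_mem)] at this
    rw [← this]
    simp
  have hexa : A ≠ ⊥ → ∃ a ∈ A, a ≠ 0 := by
    intro hbot
    by_contra hcon
    push_neg at hcon
    exact hbot (le_antisymm (fun a ha => by simp [AddSubgroup.mem_bot, hcon a ha]) bot_le)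
  constructor
  · intro hA
    refine ⟨A.map (piHom 𝒮 (H : Set G)), hcoe _ rfl, hle, ?_, ?_⟩
    · intro s hs b hb
      obtain ⟨a, ha, rfl⟩ := AddSubgroup.mem_map.mp hb
      rw [← piHom_mul_left 𝒮 hmul H hs a]
      exact AddSubgroup.mem_map_of_mem _ (hA s a ha)
    · intro hbot
      obtain ⟨a, haA, ha0⟩ := hexa hbot
      obtain ⟨x, hax⟩ := exists_component_one 𝒮 hmul ha0
      obtain ⟨t, ht, htne⟩ := (hnd x _ ((DirectSum.decompose 𝒮 a) x).2 hax).2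
      refine hnzero (t * a) (hA t a haA) (hpi_ne _ ?_)
      rw [component_one_mul 𝒮 hmul ht hax]
      exact htne
  · intro hA
    refine ⟨A.map (piHom 𝒮 (H : Set G)), hcoe _ rfl, hle, ?_, ?_⟩
    · intro s hs b hb
      obtain ⟨a, ha, rfl⟩ := AddSubgroup.mem_map.mp hb
      rw [← piHom_mul_right 𝒮 hmul H hs a]
      exact AddSubgroup.mem_map_of_mem _ (hA s a ha)
    · intro hbot
      obtain ⟨a, haA, ha0⟩ := hexa hbot
      obtain ⟨x, hax⟩ := exists_component_one 𝒮 hmul ha0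
      obtain ⟨t, ht, htne⟩ := (hnd x _ ((DirectSum.decompose 𝒮 a) x).2 hax).1
      refine hnzero (a * t) (hA t a haA) (hpi_ne _ ?_)
      rw [component_one_mul' 𝒮 hmul ht hax]
      exact htne
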